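/- Let N ≥ 1, let K_1, K_2 : ℝ² → ℝ be strictly positive C¹ kernels, let ζ_1^{(1)}, …, ζ_1^{(N)} ∈ ℝ² and ζ_2^{(1)}, …, ζ_2^{(N)} ∈ ℝ² be points, and let w_1, …, w_N be positive weights; set K_ℓ^{(s)}(z) := K_ℓ(z − ζ_ℓ^{(s)}) for ℓ ∈ {1,2}. Let the hybrid Hamiltonian Ĥ : ℝ² × ℝ² → ℂ^{2×2} have the form Ĥ(z_1, z_2) = H_c(z_1, z_2)·𝟙 + Ĥ_Q + h_1(z_1)·Ĥ_2(z_2) + h_2(z_2)·Ĥ_1(z_1), where H_c : ℝ² × ℝ² → ℝ is C¹, Ĥ_Q ∈ ℂ^{2×2} is a constant Hermitian matrix, h_1, h_2 : ℝ² → ℝ are C¹, and Ĥ_1, Ĥ_2 : ℝ² → ℂ^{2×2} are C¹ with Hermitian values. Fix indices a, b, a', b' ∈ {1, …, N} and define the four-dimensional backreaction integral Î_{aba'b'} := ∫_{ℝ²}∫_{ℝ²} [ K_1^{(a)}(z_1) K_2^{(b)}(z_2) K_2^{(b')}(z_2)·{K_1^{(a')}, Ĥ(·, z_2)}_1(z_1)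 + K_1^{(a)}(z_1) K_2^{(b)}(z_2) K_1^{(a')}(z_1)·{K_2^{(b')}, Ĥ(z_1, ·)}_2(z_2) ] / ( (Σ_c w_c K_1^{(c)}(z_1))·(Σ_d w_d K_2^{(d)}(z_2)) ) dz_1 dz_2, where {·,·}_ℓ denotes the canonical Poisson bracket in the variable z_ℓ. Assume that the integrand of Î_{aba'b'}, each of the summands it splits into according to the four terms of Ĥ, and each of the two-dimensional integrands below are Bochner integrable. Then there exists a real constant c ∈ ℝ such that Î_{aba'b'} = Î_1^{(aa')}·𝒥_2^{(bb')} + 𝓘_1^{(aa')}·𝒥̂_2^{(bb')} + 𝓘_2^{(bb')}·𝒥̂_1^{(aa')} + Î_2^{(bb')}·𝒥_1^{(aa')} + c·𝟙, where for ℓ ∈ {1,2} and indices s, s': 𝓘_ℓ^{(ss')} := ∫_{ℝ²} K_ℓ^{(s)}·{K_ℓ^{(s')}, h_ℓ} / (Σ_c w_c K_ℓ^{(c)}) dz_ℓ ∈ ℝ, Î_ℓ^{(ss')} := ∫_{ℝ²} K_ℓ^{(s)}·{K_ℓ^{(s')}, Ĥ_ℓ} / (Σ_c w_c K_ℓ^{(c)})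 dz_ℓ ∈ ℂ^{2×2}, 𝒥_ℓ^{(ss')} := ∫_{ℝ²} K_ℓ^{(s)} K_ℓ^{(s')} h_ℓ / (Σ_d w_d K_ℓ^{(d)}) dz_ℓ ∈ ℝ, and 𝒥̂_ℓ^{(ss')} := ∫_{ℝ²} K_ℓ^{(s)} K_ℓ^{(s')} Ĥ_ℓ / (Σ_d w_d K_ℓ^{(d)}) dz_ℓ ∈ ℂ^{2×2}. -/

import Mathlib

open Matrix Complex MeasureTheory

attribute [local instance] Matrix.normedAddCommGroup Matrix.normedSpace

noncomputable section

/-- The canonical Poisson bracket `{f, g} = ∂_q f · ∂_p g − ∂_p f · ∂_q g` of two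
scalar functions on phase space `ℝ²`. -/
def pbR (f g : ℝ × ℝ → ℝ) (z : ℝ × ℝ) : ℝ :=
  fderiv ℝ f z ((1 : ℝ), (0 : ℝ)) * fderiv ℝ g z ((0 : ℝ), (1 : ℝ))
    - fderiv ℝ f z ((0 : ℝ), (1 : ℝ)) * fderiv ℝ g z ((1 : ℝ), (0 : ℝ))

/-- The canonical Poisson bracket of a scalar function with a matrix-valued
function on phase space `ℝ²`. -/
def pbM (f : ℝ × ℝ → ℝ) (g : ℝ × ℝ → Matrix (Fin 2) (Fin 2) ℂ)
    (z : ℝ × ℝ) : Matrix (Fin 2) (Fin 2) ℂ :=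
  (fderiv ℝ f z ((1 : ℝ), (0 : ℝ))) • (fderiv ℝ g z ((0 : ℝ), (1 : ℝ)))
    - (fderiv ℝ f z ((0 : ℝ), (1 : ℝ))) • (fderiv ℝ g z ((1 : ℝ), (0 : ℝ)))

/-- The weighted sum `Σ_c w_c K(z − ζ_c)` appearing in the denominators. -/
def den {N : ℕ} (w : Fin N → ℝ) (K : ℝ × ℝ → ℝ) (ζ : Fin N → ℝ × ℝ)
    (z : ℝ × ℝ) : ℝ :=
  ∑ c, w c * K (z - ζ c)

/-- The integrand of the four-dimensional backreaction integral `Î_{aba'b'}`,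
for an arbitrary (matrix-valued) Hamiltonian `G` on `ℝ² × ℝ²`. -/
def integrand4 {N : ℕ} (w : Fin N → ℝ) (K1 K2 : ℝ × ℝ → ℝ)
    (ζ1 ζ2 : Fin N → ℝ × ℝ) (a b a' b' : Fin N)
    (G : (ℝ × ℝ) × (ℝ × ℝ) → Matrix (Fin 2) (Fin 2) ℂ)
    (z : (ℝ × ℝ) × (ℝ × ℝ)) : Matrix (Fin 2) (Fin 2) ℂ :=
  (den w K1 ζ1 z.1 * den w K2 ζ2 z.2)⁻¹ •
    ((K1 (z.1 - ζ1 a) * K2 (z.2 - ζ2 b) * K2 (z.2 - ζ2 b')) •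
        pbM (fun y => K1 (y - ζ1 a')) (fun y => G (y, z.2)) z.1
      + (K1 (z.1 - ζ1 a) * K2 (z.2 - ζ2 b) * K1 (z.1 - ζ1 a')) •
        pbM (fun y => K2 (y - ζ2 b')) (fun y => G (z.1, y)) z.2)

/-- Integrand of the scalar integral `𝓘_ℓ^{(ss')}`. -/
def intI {N : ℕ} (w : Fin N → ℝ) (K : ℝ × ℝ → ℝ) (ζ : Fin N → ℝ × ℝ)
    (s s' : Fin N) (hl : ℝ × ℝ → ℝ) (z : ℝ × ℝ) : ℝ :=
  K (z - ζ s) * pbR (fun y => K (y - ζ s')) hl z / den w K ζ z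

/-- Integrand of the matrix-valued integral `Î_ℓ^{(ss')}`. -/
def intIhat {N : ℕ} (w : Fin N → ℝ) (K : ℝ × ℝ → ℝ) (ζ : Fin N → ℝ × ℝ)
    (s s' : Fin N) (Hl : ℝ × ℝ → Matrix (Fin 2) (Fin 2) ℂ)
    (z : ℝ × ℝ) : Matrix (Fin 2) (Fin 2) ℂ :=
  (den w K ζ z)⁻¹ • (K (z - ζ s) • pbM (fun y => K (y - ζ s')) Hl z)

/-- Integrand of the scalar integral `𝒥_ℓ^{(ss')}`. -/
def intJ {N : ℕ} (w : Fin N → ℝ) (K : ℝ × ℝ → ℝ) (ζ : Fin N → ℝ × ℝ)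
    (s s' : Fin N) (hl : ℝ × ℝ → ℝ) (z : ℝ × ℝ) : ℝ :=
  K (z - ζ s) * K (z - ζ s') * hl z / den w K ζ z

/-- Integrand of the matrix-valued integral `𝒥̂_ℓ^{(ss')}`. -/
def intJhat {N : ℕ} (w : Fin N → ℝ) (K : ℝ × ℝ → ℝ) (ζ : Fin N → ℝ × ℝ)
    (s s' : Fin N) (Hl : ℝ × ℝ → Matrix (Fin 2) (Fin 2) ℂ)
    (z : ℝ × ℝ) : Matrix (Fin 2) (Fin 2) ℂ :=
  ((K (z - ζ s) * K (z - ζ s')) / den w K ζ z) • Hl z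

section Helpers

local notation "M2" => Matrix (Fin 2) (Fin 2) ℂ

lemma pbM_add {f : ℝ × ℝ → ℝ} {g g' : ℝ × ℝ → M2} {z : ℝ × ℝ}
    (hg : DifferentiableAt ℝ g z) (hg' : DifferentiableAt ℝ g' z) :
    pbM f (fun y => g y + g' y) z = pbM f g z + pbM f g' z := by
  have hfd : fderiv ℝ (fun y => g y + g' y) z = fderiv ℝ g z + fderiv ℝ g' z :=
    fderiv_fun_add hg hg'
  unfold pbM
  rw [hfd]
  simp only [ContinuousLinearMap.add_apply, smul_add]
  abel

lemma pbM_const {f : ℝ × ℝ → ℝ} {z : ℝ × ℝ} (M0 : M2) :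
    pbM f (fun _ => M0) z = 0 := by
  simp [pbM, fderiv_fun_const]

lemma pbM_smul_const {f h : ℝ × ℝ → ℝ} {z : ℝ × ℝ}
    (hh : DifferentiableAt ℝ h z) (M0 : M2) :
    pbM f (fun y => h y • M0) z = pbR f h z • M0 := by
  have hfd : fderiv ℝ (fun y => h y • M0) z = (fderiv ℝ h z).smulRight M0 :=
    fderiv_smul_const hh M0
  unfold pbM pbR
  rw [hfd]
  simp only [ContinuousLinearMap.smulRight_apply, smul_smul, sub_smul]

lemma pbM_const_smul {f : ℝ × ℝ → ℝ} {g : ℝ × ℝ → M2} {z : ℝ × ℝ}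
    (c : ℝ) (hg : DifferentiableAt ℝ g z) :
    pbM f (fun y => c • g y) z = c • pbM f g z := by
  have hfd : fderiv ℝ (fun y => c • g y) z = c • fderiv ℝ g z :=
    fderiv_fun_const_smul hg c
  unfold pbM
  rw [hfd]
  simp only [ContinuousLinearMap.coe_smul', Pi.smul_apply, smul_sub, smul_comm c]

/-- The continuous linear functional `A ↦ Re (A 0 0)` on `2×2` complex matrices. -/
def L00 : M2 →L[ℝ] ℝ where
  toFun A := (A 0 0).re
  map_add' A B := by simp [Matrix.add_apply]
  map_smul' r A := by simp [Matrix.smul_apply]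
  cont := Complex.continuous_re.comp ((continuous_id.matrix_elem 0 0))

lemma L00_smul_one (s : ℝ) : L00 (s • (1 : M2)) = s := by
  show ((s • (1 : M2)) 0 0).re = s
  simp [L00, Matrix.smul_apply, Matrix.one_apply]

lemma integral_prod_smul_swap {E : Type*} [NormedAddCommGroup E] [NormedSpace ℝ E]
    {α β : Type*} [MeasurableSpace α] [MeasurableSpace β]
    (μ : Measure α) (ν : Measure β) [SFinite μ] [SFinite ν]
    (f : β → ℝ) (g : α → E) :
    ∫ z : α × β, f z.2 • g z.1 ∂(μ.prod ν)
      = (∫ y, f y ∂ν) • ∫ x, g x ∂μ := by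
  have h0 : ∫ z : α × β, f z.2 • g z.1 ∂(μ.prod ν)
      = ∫ z : α × β, (fun p : β × α => f p.1 • g p.2) z.swap ∂(μ.prod ν) := rfl
  rw [h0, MeasureTheory.integral_prod_swap (fun p : β × α => f p.1 • g p.2)]
  exact integral_prod_smul f g

end Helpers

/-- Factorization of the four-dimensional backreaction integral of the
two-dimensional koopmon scheme: for product regularization kernels and hybrid
Hamiltonians of the form
`Ĥ(z₁,z₂) = H_c(z₁,z₂)·𝟙 + Ĥ_Q + h₁(z₁)·Ĥ₂(z₂) + h₂(z₂)·Ĥ₁(z₁)`,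
one has `Î_{aba'b'} = Î₁^{(aa')}𝒥₂^{(bb')} + 𝓘₁^{(aa')}𝒥̂₂^{(bb')}
+ 𝓘₂^{(bb')}𝒥̂₁^{(aa')} + Î₂^{(bb')}𝒥₁^{(aa')} + c·𝟙` for some real `c`. -/
theorem backreaction_integral_factorization
    (N : ℕ) (hN : 1 ≤ N)
    (K1 K2 : ℝ × ℝ → ℝ)
    (hK1smooth : ContDiff ℝ 1 K1) (hK2smooth : ContDiff ℝ 1 K2)
    (hK1pos : ∀ z, 0 < K1 z) (hK2pos : ∀ z, 0 < K2 z)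
    (ζ1 ζ2 : Fin N → ℝ × ℝ)
    (w : Fin N → ℝ) (hw : ∀ c, 0 < w c)
    (Hh : (ℝ × ℝ) × (ℝ × ℝ) → Matrix (Fin 2) (Fin 2) ℂ)
    (Hc : (ℝ × ℝ) × (ℝ × ℝ) → ℝ) (hHc : ContDiff ℝ 1 Hc)
    (HQ : Matrix (Fin 2) (Fin 2) ℂ) (hHQ : HQ.IsHermitian)
    (h1 h2 : ℝ × ℝ → ℝ) (hh1 : ContDiff ℝ 1 h1) (hh2 : ContDiff ℝ 1 h2)
    (H1 H2 : ℝ × ℝ → Matrix (Fin 2) (Fin 2) ℂ)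
    (hH1 : ContDiff ℝ 1 H1) (hH2 : ContDiff ℝ 1 H2)
    (hH1herm : ∀ z, (H1 z).IsHermitian) (hH2herm : ∀ z, (H2 z).IsHermitian)
    (hform : ∀ z : (ℝ × ℝ) × (ℝ × ℝ),
      Hh z = Hc z • (1 : Matrix (Fin 2) (Fin 2) ℂ) + HQ
        + h1 z.1 • H2 z.2 + h2 z.2 • H1 z.1)
    (a b a' b' : Fin N)
    (hint : @Integrable _ _ SeminormedAddGroup.toContinuousENorm _ _ (integrand4 w K1 K2 ζ1 ζ2 a b a' b' Hh) volume)
    (hintHc : @Integrable _ _ SeminormedAddGroup.toContinuousENorm _ _ (integrand4 w K1 K2 ζ1 ζ2 a b a' b'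
      (fun z => Hc z • (1 : Matrix (Fin 2) (Fin 2) ℂ))) volume)
    (hintHQ : @Integrable _ _ SeminormedAddGroup.toContinuousENorm _ _ (integrand4 w K1 K2 ζ1 ζ2 a b a' b' (fun _ => HQ)) volume)
    (hint12 : @Integrable _ _ SeminormedAddGroup.toContinuousENorm _ _ (integrand4 w K1 K2 ζ1 ζ2 a b a' b'
      (fun z => h1 z.1 • H2 z.2)) volume)
    (hint21 : @Integrable _ _ SeminormedAddGroup.toContinuousENorm _ _ (integrand4 w K1 K2 ζ1 ζ2 a b a' b'
      (fun z => h2 z.2 • H1 z.1)) volume)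
    (hintI1 : Integrable (intI w K1 ζ1 a a' h1))
    (hintI2 : Integrable (intI w K2 ζ2 b b' h2))
    (hintIhat1 : @Integrable _ _ SeminormedAddGroup.toContinuousENorm _ _ (intIhat w K1 ζ1 a a' H1) volume)
    (hintIhat2 : @Integrable _ _ SeminormedAddGroup.toContinuousENorm _ _ (intIhat w K2 ζ2 b b' H2) volume)
    (hintJ1 : Integrable (intJ w K1 ζ1 a a' h1))
    (hintJ2 : Integrable (intJ w K2 ζ2 b b' h2))
    (hintJhat1 : @Integrable _ _ SeminormedAddGroup.toContinuousENorm _ _ (intJhat w K1 ζ1 a a' H1) volume)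
    (hintJhat2 : @Integrable _ _ SeminormedAddGroup.toContinuousENorm _ _ (intJhat w K2 ζ2 b b' H2) volume) :
    ∃ c : ℝ,
      (∫ z : (ℝ × ℝ) × (ℝ × ℝ), integrand4 w K1 K2 ζ1 ζ2 a b a' b' Hh z)
        = (∫ z : ℝ × ℝ, intJ w K2 ζ2 b b' h2 z) •
            (∫ z : ℝ × ℝ, intIhat w K1 ζ1 a a' H1 z)
          + (∫ z : ℝ × ℝ, intI w K1 ζ1 a a' h1 z) •
            (∫ z : ℝ × ℝ, intJhat w K2 ζ2 b b' H2 z)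
          + (∫ z : ℝ × ℝ, intI w K2 ζ2 b b' h2 z) •
            (∫ z : ℝ × ℝ, intJhat w K1 ζ1 a a' H1 z)
          + (∫ z : ℝ × ℝ, intJ w K1 ζ1 a a' h1 z) •
            (∫ z : ℝ × ℝ, intIhat w K2 ζ2 b b' H2 z)
          + c • (1 : Matrix (Fin 2) (Fin 2) ℂ) := by
  classical
  have hHcd : Differentiable ℝ Hc := hHc.differentiable one_ne_zero
  have hh1d : Differentiable ℝ h1 := hh1.differentiable one_ne_zero
  have hh2d : Differentiable ℝ h2 := hh2.differentiable one_ne_zero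
  have hH1d : Differentiable ℝ H1 := hH1.differentiable one_ne_zero
  have hH2d : Differentiable ℝ H2 := hH2.differentiable one_ne_zero
  -- differentiability of the partial maps of Hc
  have dHc1 : ∀ z2 y : ℝ × ℝ, DifferentiableAt ℝ (fun y => Hc (y, z2)) y := by
    intro z2 y
    exact (hHcd (y, z2)).comp y (differentiableAt_id.prodMk (differentiableAt_const _))
  have dHc2 : ∀ z1 y : ℝ × ℝ, DifferentiableAt ℝ (fun y => Hc (z1, y)) y := by
    intro z1 y
    exact (hHcd (z1, y)).comp y ((differentiableAt_const _).prodMk differentiableAt_id)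
  -- pointwise splitting of the integrand according to the four parts of Hh
  have key : ∀ z : (ℝ × ℝ) × (ℝ × ℝ),
      integrand4 w K1 K2 ζ1 ζ2 a b a' b' Hh z
        = integrand4 w K1 K2 ζ1 ζ2 a b a' b'
            (fun z => Hc z • (1 : Matrix (Fin 2) (Fin 2) ℂ)) z
          + integrand4 w K1 K2 ζ1 ζ2 a b a' b' (fun _ => HQ) z
          + integrand4 w K1 K2 ζ1 ζ2 a b a' b' (fun z => h1 z.1 • H2 z.2) z
          + integrand4 w K1 K2 ζ1 ζ2 a b a' b' (fun z => h2 z.2 • H1 z.1) z := by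
    intro z
    have dA : DifferentiableAt ℝ
        (fun y => Hc (y, z.2) • (1 : Matrix (Fin 2) (Fin 2) ℂ)) z.1 :=
      (dHc1 z.2 z.1).smul_const _
    have dB : DifferentiableAt ℝ
        (fun _ : ℝ × ℝ => HQ) z.1 := differentiableAt_const _
    have dC : DifferentiableAt ℝ (fun y => h1 y • H2 z.2) z.1 :=
      (hh1d z.1).smul_const _
    have dD : DifferentiableAt ℝ (fun y => h2 z.2 • H1 y) z.1 :=
      (hH1d z.1).fun_const_smul _
    have dA' : DifferentiableAt ℝ
        (fun y => Hc (z.1, y) • (1 : Matrix (Fin 2) (Fin 2) ℂ)) z.2 :=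
      (dHc2 z.1 z.2).smul_const _
    have dB' : DifferentiableAt ℝ
        (fun _ : ℝ × ℝ => HQ) z.2 := differentiableAt_const _
    have dC' : DifferentiableAt ℝ (fun y => h1 z.1 • H2 y) z.2 :=
      (hH2d z.2).fun_const_smul _
    have dD' : DifferentiableAt ℝ (fun y => h2 y • H1 z.1) z.2 :=
      (hh2d z.2).smul_const _
    simp only [integrand4]
    rw [show (fun y => Hh (y, z.2))
        = fun y => Hc (y, z.2) • (1 : Matrix (Fin 2) (Fin 2) ℂ) + HQ
            + h1 y • H2 z.2 + h2 z.2 • H1 y from funext fun y => hform (y, z.2)]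
    rw [show (fun y => Hh (z.1, y))
        = fun y => Hc (z.1, y) • (1 : Matrix (Fin 2) (Fin 2) ℂ) + HQ
            + h1 z.1 • H2 y + h2 y • H1 z.1 from funext fun y => hform (z.1, y)]
    rw [pbM_add ((dA.fun_add dB).fun_add dC) dD, pbM_add (dA.fun_add dB) dC, pbM_add dA dB]
    rw [pbM_add ((dA'.fun_add dB').fun_add dC') dD', pbM_add (dA'.fun_add dB') dC',
      pbM_add dA' dB']
    simp only [smul_add]
    abel
  -- the HQ part vanishes
  have hHQ0 : (∫ z : (ℝ × ℝ) × (ℝ × ℝ),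
      integrand4 w K1 K2 ζ1 ζ2 a b a' b' (fun _ => HQ) z) = 0 := by
    have : ∀ z : (ℝ × ℝ) × (ℝ × ℝ),
        integrand4 w K1 K2 ζ1 ζ2 a b a' b' (fun _ => HQ) z = 0 := by
      intro z
      simp only [integrand4]
      rw [pbM_const HQ, pbM_const HQ]
      simp
    simp only [this, integral_zero]
  -- the Hc part is a real multiple of the identity
  obtain ⟨c, hc⟩ : ∃ c : ℝ,
      (∫ z : (ℝ × ℝ) × (ℝ × ℝ), integrand4 w K1 K2 ζ1 ζ2 a b a' b'
        (fun z => Hc z • (1 : Matrix (Fin 2) (Fin 2) ℂ)) z)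
        = c • (1 : Matrix (Fin 2) (Fin 2) ℂ) := by
    have hpt : ∀ z : (ℝ × ℝ) × (ℝ × ℝ),
        integrand4 w K1 K2 ζ1 ζ2 a b a' b'
          (fun z => Hc z • (1 : Matrix (Fin 2) (Fin 2) ℂ)) z
        = ((den w K1 ζ1 z.1 * den w K2 ζ2 z.2)⁻¹
            * ((K1 (z.1 - ζ1 a) * K2 (z.2 - ζ2 b) * K2 (z.2 - ζ2 b'))
                * pbR (fun y => K1 (y - ζ1 a')) (fun y => Hc (y, z.2)) z.1
              + (K1 (z.1 - ζ1 a) * K2 (z.2 - ζ2 b) * K1 (z.1 - ζ1 a'))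
                * pbR (fun y => K2 (y - ζ2 b')) (fun y => Hc (z.1, y)) z.2))
            • (1 : Matrix (Fin 2) (Fin 2) ℂ) := by
      intro z
      simp only [integrand4]
      rw [pbM_smul_const (dHc1 z.2 z.1) 1, pbM_smul_const (dHc2 z.1 z.2) 1]
      rw [smul_smul, smul_smul, ← add_smul, smul_smul]
    have hpt' : ∀ z : (ℝ × ℝ) × (ℝ × ℝ),
        integrand4 w K1 K2 ζ1 ζ2 a b a' b'
          (fun z => Hc z • (1 : Matrix (Fin 2) (Fin 2) ℂ)) z
        = L00 (integrand4 w K1 K2 ζ1 ζ2 a b a' b'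
            (fun z => Hc z • (1 : Matrix (Fin 2) (Fin 2) ℂ)) z)
            • (1 : Matrix (Fin 2) (Fin 2) ℂ) := by
      intro z
      rw [hpt z, L00_smul_one]
    refine ⟨∫ z : (ℝ × ℝ) × (ℝ × ℝ), L00 (integrand4 w K1 K2 ζ1 ζ2 a b a' b'
        (fun z => Hc z • (1 : Matrix (Fin 2) (Fin 2) ℂ)) z), ?_⟩
    rw [show (fun z : (ℝ × ℝ) × (ℝ × ℝ) => integrand4 w K1 K2 ζ1 ζ2 a b a' b'
        (fun z => Hc z • (1 : Matrix (Fin 2) (Fin 2) ℂ)) z)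
      = fun z => L00 (integrand4 w K1 K2 ζ1 ζ2 a b a' b'
          (fun z => Hc z • (1 : Matrix (Fin 2) (Fin 2) ℂ)) z)
          • (1 : Matrix (Fin 2) (Fin 2) ℂ) from funext hpt']
    rw [integral_smul_const]
  -- the mixed h1 • H2 part factorizes
  have h12 : (∫ z : (ℝ × ℝ) × (ℝ × ℝ),
      integrand4 w K1 K2 ζ1 ζ2 a b a' b' (fun z => h1 z.1 • H2 z.2) z)
      = (∫ z : ℝ × ℝ, intI w K1 ζ1 a a' h1 z) •
          (∫ z : ℝ × ℝ, intJhat w K2 ζ2 b b' H2 z)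
        + (∫ z : ℝ × ℝ, intJ w K1 ζ1 a a' h1 z) •
          (∫ z : ℝ × ℝ, intIhat w K2 ζ2 b b' H2 z) := by
    have e12 : ∀ z : (ℝ × ℝ) × (ℝ × ℝ),
        integrand4 w K1 K2 ζ1 ζ2 a b a' b' (fun z => h1 z.1 • H2 z.2) z
        = intI w K1 ζ1 a a' h1 z.1 • intJhat w K2 ζ2 b b' H2 z.2
          + intJ w K1 ζ1 a a' h1 z.1 • intIhat w K2 ζ2 b b' H2 z.2 := by
      intro z
      simp only [integrand4, intI, intJ, intIhat, intJhat]
      rw [pbM_smul_const (hh1d z.1) (H2 z.2), pbM_const_smul (h1 z.1) (hH2d z.2)]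
      simp only [smul_add, smul_smul, div_eq_mul_inv, mul_inv]
      congr 1 <;> congr 1 <;> ring
    simp only [e12]
    rw [MeasureTheory.Measure.volume_eq_prod (ℝ × ℝ) (ℝ × ℝ),
      integral_add (hintI1.smul_prod hintJhat2) (hintJ1.smul_prod hintIhat2),
      integral_prod_smul, integral_prod_smul]
  -- the mixed h2 • H1 part factorizes
  have h21 : (∫ z : (ℝ × ℝ) × (ℝ × ℝ),
      integrand4 w K1 K2 ζ1 ζ2 a b a' b' (fun z => h2 z.2 • H1 z.1) z)
      = (∫ z : ℝ × ℝ, intJ w K2 ζ2 b b' h2 z) •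
          (∫ z : ℝ × ℝ, intIhat w K1 ζ1 a a' H1 z)
        + (∫ z : ℝ × ℝ, intI w K2 ζ2 b b' h2 z) •
          (∫ z : ℝ × ℝ, intJhat w K1 ζ1 a a' H1 z) := by
    have e21 : ∀ z : (ℝ × ℝ) × (ℝ × ℝ),
        integrand4 w K1 K2 ζ1 ζ2 a b a' b' (fun z => h2 z.2 • H1 z.1) z
        = intJ w K2 ζ2 b b' h2 z.2 • intIhat w K1 ζ1 a a' H1 z.1
          + intI w K2 ζ2 b b' h2 z.2 • intJhat w K1 ζ1 a a' H1 z.1 := by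
      intro z
      simp only [integrand4, intI, intJ, intIhat, intJhat]
      rw [pbM_const_smul (h2 z.2) (hH1d z.1), pbM_smul_const (hh2d z.2) (H1 z.1)]
      simp only [smul_add, smul_smul, div_eq_mul_inv, mul_inv]
      congr 1 <;> congr 1 <;> ring
    have hi1 : @Integrable _ _ SeminormedAddGroup.toContinuousENorm _ _ (fun z : (ℝ × ℝ) × (ℝ × ℝ) =>
        intJ w K2 ζ2 b b' h2 z.2 • intIhat w K1 ζ1 a a' H1 z.1) volume :=
      (hintJ2.smul_prod hintIhat1).swap
    have hi2 : @Integrable _ _ SeminormedAddGroup.toContinuousENorm _ _ (fun z : (ℝ × ℝ) × (ℝ × ℝ) =>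
        intI w K2 ζ2 b b' h2 z.2 • intJhat w K1 ζ1 a a' H1 z.1) volume :=
      (hintI2.smul_prod hintJhat1).swap
    simp only [e21]
    rw [integral_add hi1 hi2, MeasureTheory.Measure.volume_eq_prod (ℝ × ℝ) (ℝ × ℝ),
      integral_prod_smul_swap, integral_prod_smul_swap]
  refine ⟨c, ?_⟩
  have hABC : @Integrable _ _ SeminormedAddGroup.toContinuousENorm _ _ (fun z : (ℝ × ℝ) × (ℝ × ℝ) =>
      integrand4 w K1 K2 ζ1 ζ2 a b a' b'
          (fun z => Hc z • (1 : Matrix (Fin 2) (Fin 2) ℂ)) z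
        + integrand4 w K1 K2 ζ1 ζ2 a b a' b' (fun _ => HQ) z
        + integrand4 w K1 K2 ζ1 ζ2 a b a' b' (fun z => h1 z.1 • H2 z.2) z) volume :=
    (hintHc.add hintHQ).add hint12
  have hAB : @Integrable _ _ SeminormedAddGroup.toContinuousENorm _ _ (fun z : (ℝ × ℝ) × (ℝ × ℝ) =>
      integrand4 w K1 K2 ζ1 ζ2 a b a' b'
          (fun z => Hc z • (1 : Matrix (Fin 2) (Fin 2) ℂ)) z
        + integrand4 w K1 K2 ζ1 ζ2 a b a' b' (fun _ => HQ) z) volume :=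
    hintHc.add hintHQ
  simp only [key]
  rw [integral_add hABC hint21, integral_add hAB hint12,
    integral_add hintHc hintHQ, hHQ0, hc, h12, h21]
  abel

end
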